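/- Let A be an existentially closed L-structure and let f be an n-ary function symbol of L with n ≥ 2. Then for any k ∈ ℕ, any pairwise distinct (n−1)-tuples b̄₁, …, b̄ₖ of elements of A, and any elements c₁, …, cₖ of A, there exists a ∈ A with f(a, b̄ᵢ) = cᵢ for all i ≤ k. -/

import Mathlib

open FirstOrder FirstOrder.Language

universe u v w

/-- A flat formula in the variables `V`: either `R(z̄)` (`pos = true`), `¬ R(z̄)`
(`pos = false`), or `f(z̄) = z'`.  Constant symbols are `0`-ary function symbols. -/
inductive FlatFormula (L : FirstOrder.Language.{v, w}) (V : Type u) where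
  | rel {n : ℕ} (R : L.Relations n) (z : Fin n → V) (pos : Bool) : FlatFormula L V
  | func {n : ℕ} (f : L.Functions n) (z : Fin n → V) (z' : V) : FlatFormula L V

/-- Realization of a flat formula in an `L`-structure `M` under an assignment `v : V → M`. -/
def FlatFormula.Realize {L : FirstOrder.Language.{v, w}} {V : Type u} {M : Type*}
    [L.Structure M] (v : V → M) : FlatFormula L V → Prop
  | .rel R z pos => (Structure.RelMap R (fun i => v (z i)) ↔ pos = true)
  | .func f z z' => Structure.funMap f (fun i => v (z i)) = v z'

/-- A flat diagram (a set of flat formulas) is consistent if no relation instance occurs both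
positively and negatively, and each function symbol is assigned at most one value on each
tuple of variables. -/
def FlatConsistent {L : FirstOrder.Language.{v, w}} {V : Type u}
    (Δ : Set (FlatFormula L V)) : Prop :=
  (∀ {n : ℕ} (R : L.Relations n) (z : Fin n → V),
      ¬ (FlatFormula.rel R z true ∈ Δ ∧ FlatFormula.rel R z false ∈ Δ)) ∧
  (∀ {n : ℕ} (f : L.Functions n) (z : Fin n → V) (z₁ z₂ : V),
      FlatFormula.func f z z₁ ∈ Δ → FlatFormula.func f z z₂ ∈ Δ → z₁ = z₂)

/-- A flat formula mentions a variable on the right of `α ⊕ β` (i.e. among the `ȳ`)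
in its argument tuple. -/
def FlatFormula.MentionsRight {L : FirstOrder.Language.{v, w}} {α β : Type u} :
    FlatFormula L (α ⊕ β) → Prop
  | .rel _ z _ => ∃ i, (z i).isRight
  | .func _ z _ => ∃ i, (z i).isRight

/-- An extension diagram in `(x̄, ȳ)` (with `x̄` indexed by `Fin m` and `ȳ` by `Fin n`):
a finite consistent flat diagram each of whose formulas mentions a variable among the `ȳ`. -/
def IsExtensionDiagram {L : FirstOrder.Language.{v, w}} {m n : ℕ}
    (Δ : Set (FlatFormula L (Fin m ⊕ Fin n))) : Prop :=
  Δ.Finite ∧ FlatConsistent Δ ∧ ∀ φ ∈ Δ, φ.MentionsRight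

/-- `M ⊨ φ_Δ(ā, b̄)`: all formulas of `Δ` hold under the assignment `Sum.elim a b`, and the
combined tuple `ā b̄` is non-redundant (its entries are pairwise distinct). -/
def RealizesExtDiagram {L : FirstOrder.Language.{v, w}} {m n : ℕ} {M : Type*} [L.Structure M]
    (Δ : Set (FlatFormula L (Fin m ⊕ Fin n))) (a : Fin m → M) (b : Fin n → M) : Prop :=
  (∀ φ ∈ Δ, FlatFormula.Realize (Sum.elim a b) φ) ∧ Function.Injective (Sum.elim a b)

/-- `M` is a model of `T^∅_L`: `M` satisfies the sentence
`ψ_Δ = ∀ x̄ (δ(x̄) → ∃ ȳ φ_Δ(x̄, ȳ))` for every extension diagram `Δ`. -/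
def ModelsTEmpty (L : FirstOrder.Language.{v, w}) (M : Type*) [L.Structure M] : Prop :=
  ∀ (m n : ℕ) (Δ : Set (FlatFormula L (Fin m ⊕ Fin n))), IsExtensionDiagram Δ →
    ∀ a : Fin m → M, Function.Injective a → ∃ b : Fin n → M, RealizesExtDiagram Δ a b

/-- An `L`-structure `A` is existentially closed if every existential quantifier-free
statement with parameters in `A` which holds in some extension of `A` already holds in `A`. -/
def IsExistentiallyClosed (L : FirstOrder.Language.{v, w}) (A : Type u) [L.Structure A] :
    Prop :=
  ∀ (B : Type (max u v w)) [L.Structure B] (g : A ↪[L] B)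
    (m n : ℕ) (φ : L.Formula (Fin m ⊕ Fin n)), φ.IsQF →
      ∀ a : Fin m → A,
        (∃ b : Fin n → B, φ.Realize (Sum.elim (fun i => g (a i)) b)) →
        ∃ b : Fin n → A, φ.Realize (Sum.elim a b)

/-- A bundled `L`-structure (used to quantify existentially over `L`-structures). -/
structure BStructure (L : FirstOrder.Language.{v, w}) : Type (max (u + 1) v w) where
  carrier : Type u
  [struc : L.Structure carrier]

attribute [instance] BStructure.struc

instance {L : FirstOrder.Language.{v, w}} : CoeSort (BStructure.{u} L) (Type u) :=
  ⟨BStructure.carrier⟩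

/-- All variables occurring in a flat formula lie in the set `S`. -/
def FlatFormula.VarsIn {L : FirstOrder.Language.{v, w}} {V : Type u} (S : Set V) :
    FlatFormula L V → Prop
  | .rel _ z _ => ∀ i, z i ∈ S
  | .func _ z z' => (∀ i, z i ∈ S) ∧ z' ∈ S

/-- `Δ` is a complete consistent flat diagram in the variables `S`. -/
def FlatCompleteOn {L : FirstOrder.Language.{v, w}} {V : Type u} (S : Set V)
    (Δ : Set (FlatFormula L V)) : Prop :=
  FlatConsistent Δ ∧ (∀ φ ∈ Δ, FlatFormula.VarsIn S φ) ∧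
  (∀ {n : ℕ} (R : L.Relations n) (z : Fin n → V), (∀ i, z i ∈ S) →
      (FlatFormula.rel R z true ∈ Δ ∨ FlatFormula.rel R z false ∈ Δ)) ∧
  (∀ {n : ℕ} (f : L.Functions n) (z : Fin n → V), (∀ i, z i ∈ S) →
      ∃ z' ∈ S, FlatFormula.func f z z' ∈ Δ)

section GenericAux

private lemma realize_foldr_inf {L : FirstOrder.Language.{v, w}} {α : Type*} {M : Type*}
    [L.Structure M] (l : List (L.Formula α)) (v : α → M) :
    (l.foldr (· ⊓ ·) ⊤).Realize v ↔ ∀ φ ∈ l, φ.Realize v := by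
  induction l with
  | nil => simp
  | cons φ l ih =>
      simp only [List.foldr_cons, List.mem_cons, Formula.realize_inf, ih]
      constructor
      · rintro ⟨h1, h2⟩ ψ (rfl | hψ)
        · exact h1
        · exact h2 ψ hψ
      · intro h
        exact ⟨h φ (Or.inl rfl), fun ψ hψ => h ψ (Or.inr hψ)⟩

private lemma isQF_foldr_inf {L : FirstOrder.Language.{v, w}} {α : Type*}
    (l : List (L.Formula α)) (h : ∀ φ ∈ l, φ.IsQF) :
    (l.foldr (· ⊓ ·) ⊤).IsQF := by
  induction l with
  | nil => exact BoundedFormula.IsQF.top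
  | cons φ l ih =>
      exact (h φ List.mem_cons_self).inf (ih fun ψ hψ => h ψ (List.mem_cons_of_mem _ hψ))

end GenericAux

/-- In an existentially closed `L`-structure, an `(n+1)`-ary function
symbol (with `n ≥ 1`, i.e. arity at least `2`) is generic: for pairwise distinct
`n`-tuples `b̄₁, …, b̄ₖ` and arbitrary elements `c₁, …, cₖ` there is an `a` with
`f(a, b̄ᵢ) = cᵢ` for all `i`. -/
theorem existentiallyClosed_generic_function (L : FirstOrder.Language.{v, w})
    (A : Type u) [L.Structure A] (hA : IsExistentiallyClosed L A)
    (n : ℕ) (hn : 1 ≤ n) (f : L.Functions (n + 1))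
    (k : ℕ) (bs : Fin k → (Fin n → A)) (hbs : Function.Injective bs) (c : Fin k → A) :
    ∃ a : A, ∀ i : Fin k, Structure.funMap f (Fin.cons a (bs i)) = c i := by
  classical
  -- Step 1: `A` is nonempty.
  have hne : Nonempty A := by
    by_contra hne
    letI SB : L.Structure (ULift.{max v w} (Option A)) :=
      { funMap := fun _ _ => ⟨none⟩
        RelMap := fun {l} R _ => ∃ w : Fin l → A, Structure.RelMap R w }
    have hinj : Function.Injective (fun x : A => (⟨some x⟩ : ULift.{max v w} (Option A))) :=
      fun x _ _ => absurd ⟨x⟩ hne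
    have hmapf : ∀ {l : ℕ} (g : L.Functions l) (v : Fin l → A),
        Structure.funMap (M := ULift.{max v w} (Option A)) g
          ((fun x : A => (⟨some x⟩ : ULift.{max v w} (Option A))) ∘ v)
          = ⟨some (Structure.funMap g v)⟩ :=
      fun g v => absurd ⟨Structure.funMap g v⟩ hne
    have hmapr : ∀ {l : ℕ} (R : L.Relations l) (v : Fin l → A),
        (Structure.RelMap (M := ULift.{max v w} (Option A)) R
          ((fun x : A => (⟨some x⟩ : ULift.{max v w} (Option A))) ∘ v)
          ↔ Structure.RelMap R v) := by
      intro l R v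
      constructor
      · rintro ⟨w, hw⟩
        cases l with
        | zero =>
            have : w = v := funext fun i => i.elim0
            rwa [this] at hw
        | succ l => exact absurd ⟨v 0⟩ hne
      · intro h
        exact ⟨v, h⟩
    obtain ⟨b, _⟩ := hA (ULift.{max v w} (Option A))
      ⟨⟨fun x => ⟨some x⟩, hinj⟩, fun g v => (hmapf g v).symm, fun R v => hmapr R v⟩
      0 1 ⊤ BoundedFormula.IsQF.top
      (fun i => i.elim0)
      ⟨fun _ => ⟨none⟩, by simp⟩
    exact hne ⟨b 0⟩
  obtain ⟨a0⟩ := hne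
  -- The target structure on `Option A`.
  letI SO : L.Structure (Option A) :=
    { funMap := fun {l} g v =>
        if h : ∃ i : Fin k, ∃ _ : l = n + 1, HEq g f ∧
            HEq v ((Fin.cons (none : Option A) (fun j => some (bs i j))) :
              Fin (n + 1) → Option A) then
          some (c h.choose)
        else some (Structure.funMap g fun j => (v j).getD a0)
      RelMap := fun R v => Structure.RelMap R fun j => (v j).getD a0 }
  have hsome : ∀ {l : ℕ} (g : L.Functions l) (v : Fin l → A),
      Structure.funMap (M := Option A) g (fun j => some (v j))
        = some (Structure.funMap g v) := by
    intro l g v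
    show dite _ _ _ = _
    rw [dif_neg]
    · rfl
    · rintro ⟨i, rfl, hg, hv⟩
      have h0 := congrFun (eq_of_heq hv) 0
      simp [Fin.cons_zero] at h0
  have hspec : ∀ i : Fin k,
      Structure.funMap (M := Option A) f
        (Fin.cons (none : Option A) (fun j => some (bs i j))) = some (c i) := by
    intro i
    have hc : ∃ i' : Fin k, ∃ _ : (n + 1) = n + 1, HEq f f ∧
        HEq ((Fin.cons (none : Option A) (fun j => some (bs i j))) :
            Fin (n + 1) → Option A)
          ((Fin.cons (none : Option A) (fun j => some (bs i' j))) :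
            Fin (n + 1) → Option A) :=
      ⟨i, rfl, HEq.rfl, HEq.rfl⟩
    show dite _ _ _ = _
    rw [dif_pos hc]
    obtain ⟨_, _, hv⟩ := hc.choose_spec
    have hvv := eq_of_heq hv
    have hbe : bs i = bs hc.choose := by
      funext j
      have := congrFun hvv j.succ
      simpa [Fin.cons_succ] using this
    rw [← hbs hbe]
  -- Lift to the right universe.
  letI SB : L.Structure (ULift.{max v w} (Option A)) :=
    { funMap := fun g v => ⟨Structure.funMap g fun i => (v i).down⟩
      RelMap := fun R v => Structure.RelMap (M := Option A) R fun i => (v i).down }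
  have hinj : Function.Injective (fun x : A => (⟨some x⟩ : ULift.{max v w} (Option A))) := by
    intro x y h
    simpa using congrArg ULift.down h
  have hmapf : ∀ {l : ℕ} (g : L.Functions l) (v : Fin l → A),
      Structure.funMap (M := ULift.{max v w} (Option A)) g
        ((fun x : A => (⟨some x⟩ : ULift.{max v w} (Option A))) ∘ v)
        = ⟨some (Structure.funMap g v)⟩ := by
    intro l g v
    show (⟨Structure.funMap (M := Option A) g fun j => some (v j)⟩ :
      ULift.{max v w} (Option A)) = _
    rw [hsome]
  have hmapr : ∀ {l : ℕ} (R : L.Relations l) (v : Fin l → A),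
      (Structure.RelMap (M := ULift.{max v w} (Option A)) R
        ((fun x : A => (⟨some x⟩ : ULift.{max v w} (Option A))) ∘ v)
        ↔ Structure.RelMap R v) := by
    intro l R v
    exact Iff.rfl
  -- Indexing of parameters.
  set m := k * n + k with hm
  set idxb : Fin k → Fin n → Fin m := fun i j => Fin.castAdd k (finProdFinEquiv (i, j))
    with hidxb
  set idxc : Fin k → Fin m := fun i => Fin.natAdd (k * n) i with hidxc
  set aa : Fin m → A := fun p =>
    Sum.elim (fun q : Fin (k * n) =>
        bs (finProdFinEquiv.symm q).1 (finProdFinEquiv.symm q).2) c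
      (finSumFinEquiv.symm p) with haa
  have haab : ∀ i j, aa (idxb i j) = bs i j := by
    intro i j
    rw [hidxb, haa]
    simp only [finSumFinEquiv_symm_apply_castAdd, Sum.elim_inl, Equiv.symm_apply_apply]
  have haac : ∀ i, aa (idxc i) = c i := by
    intro i
    rw [hidxc, haa]
    simp only [finSumFinEquiv_symm_apply_natAdd, Sum.elim_inr]
  -- The quantifier-free formula.
  set F : Fin k → L.Formula (Fin m ⊕ Fin 1) := fun i =>
    Term.equal
      (Term.func f (Fin.cons (Term.var (Sum.inr 0))
        (fun j => Term.var (Sum.inl (idxb i j)))))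
      (Term.var (Sum.inl (idxc i))) with hF
  set φ : L.Formula (Fin m ⊕ Fin 1) := (List.ofFn F).foldr (· ⊓ ·) ⊤ with hφ
  have hQF : φ.IsQF := by
    apply isQF_foldr_inf
    intro ψ hψ
    rw [List.mem_ofFn] at hψ
    obtain ⟨i, rfl⟩ := hψ
    exact (BoundedFormula.IsAtomic.equal _ _).isQF
  -- The formula is realized in the extension.
  have hex : ∃ b : Fin 1 → ULift.{max v w} (Option A),
      φ.Realize (Sum.elim (fun i =>
        (fun x : A => (⟨some x⟩ : ULift.{max v w} (Option A))) (aa i)) b) := by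
    refine ⟨fun _ => ⟨none⟩, ?_⟩
    rw [hφ, realize_foldr_inf]
    intro ψ hψ
    rw [List.mem_ofFn] at hψ
    obtain ⟨i, rfl⟩ := hψ
    rw [hF]
    simp only [Formula.realize_equal, Term.realize_func, Term.realize_var, Sum.elim_inl]
    have harg : (fun j => Term.realize
        (Sum.elim (fun i => (⟨some (aa i)⟩ : ULift.{max v w} (Option A)))
          (fun _ => (⟨none⟩ : ULift.{max v w} (Option A))))
        ((Fin.cons (Term.var (Sum.inr 0))
          (fun j => Term.var (Sum.inl (idxb i j))) :
            Fin (n + 1) → L.Term (Fin m ⊕ Fin 1)) j))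
        = (Fin.cons (⟨none⟩ : ULift.{max v w} (Option A))
            (fun j => ⟨some (bs i j)⟩) : Fin (n + 1) → ULift.{max v w} (Option A)) := by
      funext j
      refine Fin.cases ?_ (fun j => ?_) j
      · simp [Term.realize]
      · simp [Term.realize, Fin.cons_succ, haab]
    rw [harg]
    show (⟨Structure.funMap (M := Option A) f fun j =>
      ((Fin.cons (⟨none⟩ : ULift.{max v w} (Option A))
        (fun j => (⟨some (bs i j)⟩ : ULift.{max v w} (Option A))) :
          Fin (n + 1) → ULift.{max v w} (Option A)) j).down⟩ :
        ULift.{max v w} (Option A)) = ⟨some (aa (idxc i))⟩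
    have hdown : (fun j => ((Fin.cons (⟨none⟩ : ULift.{max v w} (Option A))
        (fun j => (⟨some (bs i j)⟩ : ULift.{max v w} (Option A))) :
          Fin (n + 1) → ULift.{max v w} (Option A)) j).down)
        = (Fin.cons (none : Option A) (fun j => some (bs i j)) :
            Fin (n + 1) → Option A) := by
      funext j
      refine Fin.cases ?_ (fun j => ?_) j
      · simp
      · simp [Fin.cons_succ]
    rw [hdown, hspec, haac]
  obtain ⟨b, hb⟩ := hA (ULift.{max v w} (Option A))
    ⟨⟨fun x => ⟨some x⟩, hinj⟩, fun g v => (hmapf g v).symm, fun R v => hmapr R v⟩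
    m 1 φ hQF aa hex
  refine ⟨b 0, fun i => ?_⟩
  rw [hφ, realize_foldr_inf] at hb
  have hbi := hb (F i) (by rw [List.mem_ofFn]; exact ⟨i, rfl⟩)
  rw [hF] at hbi
  simp only [Formula.realize_equal, Term.realize_func, Term.realize_var, Sum.elim_inl] at hbi
  have harg : (fun j => Term.realize (Sum.elim aa b)
      ((Fin.cons (Term.var (Sum.inr 0))
        (fun j => Term.var (Sum.inl (idxb i j))) :
          Fin (n + 1) → L.Term (Fin m ⊕ Fin 1)) j))
      = Fin.cons (b 0) (bs i) := by
    funext j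
    refine Fin.cases ?_ (fun j => ?_) j
    · simp [Term.realize]
    · simp [Term.realize, Fin.cons_succ, haab]
  rw [harg, haac i] at hbi
  exact hbi
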